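/- Suppose additionally a₁ⱼ = 1 for all j. Then the set A_k = {x ∈ ℓ¹₊ : λ₁ + (‖λ‖ − λ₁)/(1 + ‖λ‖)^k ≤ ‖x‖ ≤ ‖λ‖} is invariant under F, i.e., F(A_k) ⊆ A_k. -/

import Mathlib

/-- The operator F, sequences indexed by ℕ with index 0 playing the paper's index 1. -/
noncomputable def Fop (k : ℕ) (l : ℕ → ℝ) (a : ℕ → ℕ → ℝ) (x : ℕ → ℝ) : ℕ → ℝ :=
  fun i => l i * ((1 + ∑' j, a i j * x j) / (1 + ∑' j, x j)) ^ k

/-- if a₁ⱼ = 1 for all j, then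
A_k = {x ∈ ℓ¹₊ : λ₁ + (‖λ‖-λ₁)/(1+‖λ‖)^k ≤ ‖x‖ ≤ ‖λ‖} is invariant under F. -/
theorem stmt1 (k : ℕ) (hk : 1 ≤ k) (l : ℕ → ℝ) (a : ℕ → ℕ → ℝ)
    (hl : ∀ i, 0 < l i) (hlsum : Summable l)
    (ha : ∀ i j, a i j = 0 ∨ a i j = 1) (ha1 : ∀ j, a 0 j = 1)
    (x : ℕ → ℝ) (hx : ∀ i, 0 < x i) (hxsum : Summable x)
    (hlow : l 0 + (∑' i, l i - l 0) / (1 + ∑' i, l i) ^ k ≤ ∑' i, x i)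
    (hup : ∑' i, x i ≤ ∑' i, l i) :
    (∀ i, 0 < Fop k l a x i) ∧ Summable (Fop k l a x) ∧
      l 0 + (∑' i, l i - l 0) / (1 + ∑' i, l i) ^ k ≤ ∑' i, Fop k l a x i ∧
      ∑' i, Fop k l a x i ≤ ∑' i, l i := by
  set S := ∑' i, x i with hSdef
  set L := ∑' i, l i with hLdef
  have hS : 0 < S := Summable.tsum_pos hxsum (fun i => (hx i).le) 0 (hx 0)
  have hLpos : 0 < L := Summable.tsum_pos hlsum (fun i => (hl i).le) 0 (hl 0)
  have hsumA : ∀ i, Summable (fun j => a i j * x j) := by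
    intro i
    apply Summable.of_nonneg_of_le (fun j => ?_) (fun j => ?_) hxsum
    · rcases ha i j with h | h <;> simp [h, (hx j).le]
    · rcases ha i j with h | h <;> simp [h, (hx j).le]
  have hA0 : ∀ i, 0 ≤ ∑' j, a i j * x j := by
    intro i
    apply tsum_nonneg
    intro j
    rcases ha i j with h | h <;> simp [h, (hx j).le]
  have hAS : ∀ i, ∑' j, a i j * x j ≤ S := by
    intro i
    apply Summable.tsum_le_tsum _ (hsumA i) hxsum
    intro j
    rcases ha i j with h | h <;> simp [h, (hx j).le]
  have hden : (0:ℝ) < 1 + S := by linarith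
  have hratio_le : ∀ i, (1 + ∑' j, a i j * x j) / (1 + S) ≤ 1 := by
    intro i; rw [div_le_one hden]; linarith [hAS i]
  have hratio_pos : ∀ i, 0 < (1 + ∑' j, a i j * x j) / (1 + S) := by
    intro i; exact div_pos (by linarith [hA0 i]) hden
  have hratio_ge : ∀ i, 1 / (1 + L) ≤ (1 + ∑' j, a i j * x j) / (1 + S) := by
    intro i
    rw [div_le_div_iff₀ (by linarith) hden]
    nlinarith [hA0 i, hup]
  have hFpos : ∀ i, 0 < Fop k l a x i := by
    intro i
    exact mul_pos (hl i) (pow_pos (hratio_pos i) k)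
  have hFle : ∀ i, Fop k l a x i ≤ l i := by
    intro i
    have : ((1 + ∑' j, a i j * x j) / (1 + S)) ^ k ≤ 1 :=
      pow_le_one₀ (hratio_pos i).le (hratio_le i)
    calc Fop k l a x i ≤ l i * 1 := mul_le_mul_of_nonneg_left this (hl i).le
      _ = l i := mul_one _
  have hFsum : Summable (Fop k l a x) :=
    Summable.of_nonneg_of_le (fun i => (hFpos i).le) hFle hlsum
  refine ⟨hFpos, hFsum, ?_, Summable.tsum_le_tsum hFle hFsum hlsum⟩
  -- lower bound
  have hF0 : Fop k l a x 0 = l 0 := by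
    have hA : ∑' j, a 0 j * x j = S := by
      rw [hSdef]
      congr 1
      ext j
      rw [ha1 j, one_mul]
    simp [Fop, hA, ← hSdef, div_self hden.ne']
  have hkey : ∀ i, l i * (1 / (1 + L)) ^ k ≤ Fop k l a x i := by
    intro i
    exact mul_le_mul_of_nonneg_left
      (pow_le_pow_left₀ (by positivity) (hratio_ge i) k) (hl i).le
  have hltail : ∑' n, l (n + 1) = L - l 0 := by
    have := Summable.tsum_eq_zero_add hlsum
    rw [← hLdef] at this
    linarith
  have hFtail : (L - l 0) * (1 / (1 + L)) ^ k ≤ ∑' n, Fop k l a x (n + 1) := by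
    rw [← hltail, ← tsum_mul_right]
    exact Summable.tsum_le_tsum (fun n => hkey (n + 1))
      (((summable_nat_add_iff 1).2 hlsum).mul_right _)
      ((summable_nat_add_iff 1).2 hFsum)
  have hsplit : ∑' i, Fop k l a x i = l 0 + ∑' n, Fop k l a x (n + 1) := by
    rw [Summable.tsum_eq_zero_add hFsum, hF0]
  rw [hsplit]
  have hpow : (L - l 0) / (1 + L) ^ k = (L - l 0) * (1 / (1 + L)) ^ k := by
    rw [one_div, inv_pow, div_eq_mul_inv]
  rw [hpow]
  linarith [hFtail]
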